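/- Let σ > 0 and 0 ≤ a ≤ √6·σ, and let p = Q(a/σ) = 1 − Φ(a/σ) be the crossover probability of the binary symmetric channel induced by hard-decision decoding of antipodal signals ±a over Gaussian noise of power σ². Then 1 − H₂(p) ≥ (1/(π ln 2))·( a/σ − a³/(6σ³) )², where H₂(p) = −p·log₂ p − (1−p)·log₂(1−p) is the binary entropy function. -/

import Mathlib

open MeasureTheory ProbabilityTheory Real

/-- The standard Gaussian upper tail function
`Q(x) = 1 − Φ(x) = (1/√(2π))·∫ₓ^∞ e^{−t²/2} dt`. -/
noncomputable def gaussQ (x : ℝ) : ℝ := (gaussianReal 0 1 (Set.Ioi x)).toReal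

/-- The binary entropy function (in bits):
`H₂(p) = −p·log₂ p − (1−p)·log₂(1−p)`, with `H₂(0) = H₂(1) = 0`. -/
noncomputable def binEntropyBits (p : ℝ) : ℝ :=
  -p * Real.logb 2 p - (1 - p) * Real.logb 2 (1 - p)

lemma aux_log_ratio {u : ℝ} (h0 : 0 ≤ u) (h1 : u < 1) :
    2 * u ≤ Real.log (1 + u) - Real.log (1 - u) := by
  set g : ℝ → ℝ := fun u => Real.log (1 + u) - Real.log (1 - u) - 2 * u with hg
  have key : MonotoneOn g (Set.Ico 0 1) := by
    have hder : ∀ x ∈ interior (Set.Ico (0:ℝ) 1), 0 ≤ deriv g x := by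
      intro x hx
      rw [interior_Ico] at hx
      obtain ⟨hx0, hx1⟩ := hx
      have h1x : (0:ℝ) < 1 + x := by linarith
      have h2x : (0:ℝ) < 1 - x := by linarith
      have hd : HasDerivAt g ((1 + x)⁻¹ - (-1) * (1 - x)⁻¹ - 2) x := by
        have d1 : HasDerivAt (fun y : ℝ => Real.log (1 + y)) ((1 + x)⁻¹) x := by
          have := (Real.hasDerivAt_log h1x.ne').comp x
            ((hasDerivAt_id x).const_add 1)
          simpa [Function.comp_def] using this
        have d2 : HasDerivAt (fun y : ℝ => Real.log (1 - y)) ((-1) * (1 - x)⁻¹) x := by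
          have := (Real.hasDerivAt_log h2x.ne').comp x
            ((hasDerivAt_id x).neg.const_add 1)
          simpa [mul_comm, Function.comp_def] using this
        have d3 : HasDerivAt (fun y : ℝ => 2 * y) 2 x := by
          simpa using (hasDerivAt_id x).const_mul 2
        exact (d1.sub d2).sub d3
      rw [hd.deriv]
      have hineq : 2 ≤ (1 + x)⁻¹ + (1 - x)⁻¹ := by
        rw [← sub_nonneg]
        have he : (1 + x)⁻¹ + (1 - x)⁻¹ - 2 = 2 * x ^ 2 / ((1 + x) * (1 - x)) := by
          field_simp
          ring
        rw [he]
        positivity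
      linarith
    refine monotoneOn_of_deriv_nonneg (convex_Ico 0 1) ?_ ?_ hder
    · apply ContinuousOn.sub (ContinuousOn.sub ?_ ?_) (by fun_prop)
      · apply ContinuousOn.log (by fun_prop)
        intro x hx; obtain ⟨hx0, _⟩ := hx; positivity
      · apply ContinuousOn.log (by fun_prop)
        intro x hx; obtain ⟨_, hx1⟩ := hx
        have : (0:ℝ) < 1 - x := by linarith
        exact this.ne'
    · intro x hx
      rw [interior_Ico] at hx
      obtain ⟨hx0, hx1⟩ := hx
      have h1x : (0:ℝ) < 1 + x := by linarith
      have h2x : (0:ℝ) < 1 - x := by linarith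
      apply DifferentiableAt.differentiableWithinAt
      apply DifferentiableAt.sub (DifferentiableAt.sub ?_ ?_) (by fun_prop)
      · exact (Real.differentiableAt_log h1x.ne').comp x (by fun_prop)
      · exact (Real.differentiableAt_log h2x.ne').comp x (by fun_prop)
  have h := key (Set.mem_Ico.mpr ⟨le_rfl, one_pos⟩) (Set.mem_Ico.mpr ⟨h0, h1⟩) h0
  simp only [hg] at h
  norm_num at h
  linarith

lemma aux_pinsker {p : ℝ} (h0 : 0 ≤ p) (h1 : p ≤ 2⁻¹) :
    Real.binEntropy p ≤ Real.log 2 - (1 - 2 * p) ^ 2 / 2 := by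
  set F : ℝ → ℝ := fun p => Real.log 2 - Real.binEntropy p - (1 - 2 * p) ^ 2 / 2 with hF
  have key : AntitoneOn F (Set.Icc 0 2⁻¹) := by
    have hder : ∀ x ∈ interior (Set.Icc (0:ℝ) 2⁻¹), deriv F x ≤ 0 := by
      intro x hx
      rw [interior_Icc] at hx
      obtain ⟨hx0, hx1⟩ := hx
      have hx1' : x < 1 := by linarith
      have hd : HasDerivAt F (-(Real.log (1 - x) - Real.log x) - (2 * (1 - 2 * x) * (-2)) / 2) x := by
        have d1 := Real.hasDerivAt_binEntropy hx0.ne' hx1'.ne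
        have d2 : HasDerivAt (fun y : ℝ => (1 - 2 * y) ^ 2 / 2)
            ((2 * (1 - 2 * x) * (-2)) / 2) x := by
          have : HasDerivAt (fun y : ℝ => (1 - 2 * y)) (-2) x := by
            simpa using ((hasDerivAt_id x).const_mul 2).const_sub 1
          simpa [mul_comm, mul_assoc] using (this.pow 2).div_const 2
        have h3 := ((hasDerivAt_const x (Real.log 2)).sub d1).sub d2
        rw [hF]
        exact h3.congr_deriv (by ring)
      rw [hd.deriv]
      -- need: log x - log (1 - x) + 2 * (1 - 2 * x) ≤ 0
      have := aux_log_ratio (u := 1 - 2 * x) (by linarith) (by linarith)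
      have e1 : (1 : ℝ) + (1 - 2 * x) = 2 * (1 - x) := by ring
      have e2 : (1 : ℝ) - (1 - 2 * x) = 2 * x := by ring
      rw [e1, e2, Real.log_mul two_ne_zero (by linarith), Real.log_mul two_ne_zero hx0.ne'] at this
      linarith
    refine antitoneOn_of_deriv_nonpos (convex_Icc 0 2⁻¹) ?_ ?_ hder
    · exact Continuous.continuousOn
        (((continuous_const.sub Real.binEntropy_continuous).sub (by continuity)))
    · intro x hx
      rw [interior_Icc] at hx
      obtain ⟨hx0, hx1⟩ := hx
      apply DifferentiableAt.differentiableWithinAt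
      apply DifferentiableAt.sub (DifferentiableAt.sub (by fun_prop) ?_) (by fun_prop)
      exact Real.differentiableAt_binEntropy hx0.ne' (by linarith : x < 1).ne
  have h := key (Set.mem_Icc.mpr ⟨h0, h1⟩) (Set.mem_Icc.mpr ⟨by norm_num, le_rfl⟩) h1
  simp only [hF] at h
  rw [Real.binEntropy_two_inv] at h
  norm_num at h
  linarith

lemma aux_gaussQ_eq (x : ℝ) :
    gaussQ x = ∫ t in Set.Ioi x, gaussianPDFReal 0 1 t := by
  rw [gaussQ, gaussianReal_apply_eq_integral 0 one_ne_zero,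
    ENNReal.toReal_ofReal (setIntegral_nonneg measurableSet_Ioi
      fun t _ => gaussianPDFReal_nonneg 0 1 t)]

lemma aux_pdf_eq (t : ℝ) :
    gaussianPDFReal 0 1 t = (Real.sqrt (2 * Real.pi))⁻¹ * Real.exp (-(t ^ 2) / 2) := by
  simp [gaussianPDFReal, one_div]

lemma aux_half (x : ℝ) (hx : 0 ≤ x) :
    gaussQ x = 1 / 2 - ∫ t in Set.Ioc 0 x, gaussianPDFReal 0 1 t := by
  have habs : ∀ t : ℝ, gaussianPDFReal 0 1 |t| = gaussianPDFReal 0 1 t := by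
    intro t
    rw [aux_pdf_eq, aux_pdf_eq, sq_abs]
  have h1 : (∫ t in Set.Ioi (0:ℝ), gaussianPDFReal 0 1 t) = 1 / 2 := by
    have h2 := integral_comp_abs (f := gaussianPDFReal 0 1)
    simp_rw [habs] at h2
    rw [integral_gaussianPDFReal_eq_one 0 one_ne_zero] at h2
    linarith
  have hsplit : (∫ t in Set.Ioi (0:ℝ), gaussianPDFReal 0 1 t)
      = (∫ t in Set.Ioc 0 x, gaussianPDFReal 0 1 t)
        + ∫ t in Set.Ioi x, gaussianPDFReal 0 1 t := by
    rw [← setIntegral_union (Set.Ioc_disjoint_Ioi le_rfl) measurableSet_Ioi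
      (integrable_gaussianPDFReal 0 1).integrableOn
      (integrable_gaussianPDFReal 0 1).integrableOn,
      Set.Ioc_union_Ioi_eq_Ioi hx]
  rw [aux_gaussQ_eq]
  rw [h1] at hsplit
  linarith

lemma aux_gaussQ_le {x : ℝ} (hx : 0 ≤ x) :
    gaussQ x ≤ 1 / 2 - (Real.sqrt (2 * Real.pi))⁻¹ * (x - x ^ 3 / 6) := by
  rw [aux_half x hx]
  have hmono : (∫ t in Set.Ioc (0:ℝ) x, (Real.sqrt (2 * Real.pi))⁻¹ * (1 - t ^ 2 / 2))
      ≤ ∫ t in Set.Ioc (0:ℝ) x, gaussianPDFReal 0 1 t := by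
    refine setIntegral_mono_on ((continuous_const.mul (by continuity)).integrableOn_Ioc)
      (integrable_gaussianPDFReal 0 1).integrableOn measurableSet_Ioc ?_
    intro t _
    rw [aux_pdf_eq]
    have h := Real.add_one_le_exp (-(t ^ 2) / 2)
    have hs : (0:ℝ) < Real.sqrt (2 * Real.pi) := Real.sqrt_pos.mpr (by positivity)
    apply mul_le_mul_of_nonneg_left _ (by positivity)
    linarith
  have hval : (∫ t in Set.Ioc (0:ℝ) x, (Real.sqrt (2 * Real.pi))⁻¹ * (1 - t ^ 2 / 2))
      = (Real.sqrt (2 * Real.pi))⁻¹ * (x - x ^ 3 / 6) := by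
    rw [← intervalIntegral.integral_of_le hx, intervalIntegral.integral_const_mul]
    congr 1
    rw [intervalIntegral.integral_sub intervalIntegrable_const
      ((intervalIntegral.intervalIntegrable_pow 2).div_const 2)]
    simp [intervalIntegral.integral_div, integral_pow]
    ring
  linarith

/-- Let `σ > 0` and `0 ≤ a ≤ √6·σ`, and let `p = Q(a/σ)` be the crossover
probability of the binary symmetric channel induced by hard-decision decoding
of antipodal signals `±a` over Gaussian noise of power `σ²`.  Then
`1 − H₂(p) ≥ (1/(π ln 2))·(a/σ − a³/(6σ³))²`. -/
theorem stmt_14 (σ a : ℝ) (hσ : 0 < σ) (ha0 : 0 ≤ a)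
    (ha : a ≤ Real.sqrt 6 * σ) :
    (1 / (Real.pi * Real.log 2)) * (a / σ - a ^ 3 / (6 * σ ^ 3)) ^ 2 ≤
      1 - binEntropyBits (gaussQ (a / σ)) := by
  set x := a / σ with hxdef
  have hx0 : 0 ≤ x := div_nonneg ha0 hσ.le
  have hx6 : x ≤ Real.sqrt 6 := by
    rw [hxdef, div_le_iff₀ hσ]; linarith
  have hc0 : 0 ≤ x - x ^ 3 / 6 := by
    have : x ^ 2 ≤ 6 := by
      have h6 : (Real.sqrt 6) ^ 2 = 6 := Real.sq_sqrt (by norm_num)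
      nlinarith [Real.sqrt_nonneg 6]
    nlinarith
  have hs : (0:ℝ) < Real.sqrt (2 * Real.pi) := Real.sqrt_pos.mpr (by positivity)
  set c : ℝ := (Real.sqrt (2 * Real.pi))⁻¹ * (x - x ^ 3 / 6) with hc
  have hcnn : 0 ≤ c := mul_nonneg (by positivity) hc0
  set p := gaussQ x with hp
  have hple : p ≤ 1 / 2 - c := aux_gaussQ_le hx0
  have hp0 : 0 ≤ p := by rw [hp, gaussQ]; positivity
  have hp12 : p ≤ 2⁻¹ := by rw [show (2:ℝ)⁻¹ = 1/2 by norm_num]; linarith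
  have hpin := aux_pinsker hp0 hp12
  -- binEntropyBits p = binEntropy p / log 2
  have hbits : binEntropyBits p = Real.binEntropy p / Real.log 2 := by
    rw [binEntropyBits, Real.binEntropy, Real.log_inv, Real.log_inv, Real.logb,
      Real.logb]
    ring
  have hlog2 : (0:ℝ) < Real.log 2 := Real.log_pos (by norm_num)
  -- (1 - 2p)^2 ≥ (2c)^2
  have hsq : (2 * c) ^ 2 ≤ (1 - 2 * p) ^ 2 := by
    have h1 : 2 * c ≤ 1 - 2 * p := by linarith
    nlinarith
  -- c^2 = (x - x^3/6)^2 / (2π)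
  have hc2 : c ^ 2 = (x - x ^ 3 / 6) ^ 2 / (2 * Real.pi) := by
    rw [hc, mul_pow, ← Real.sqrt_inv, Real.sq_sqrt (by positivity)]
    ring
  have hπ : (0:ℝ) < Real.pi := Real.pi_pos
  have hgoal : a ^ 3 / (6 * σ ^ 3) = x ^ 3 / 6 := by
    rw [hxdef, div_pow]; ring
  rw [hbits, hgoal]
  set S := (x - x ^ 3 / 6) ^ 2 with hS
  have hSnn : 0 ≤ S := sq_nonneg _
  have h5 : c ^ 2 * (2 * Real.pi) = S := by
    rw [hc2]; field_simp
  have key : (1 - 2 * p) ^ 2 / (2 * Real.log 2) ≤ 1 - Real.binEntropy p / Real.log 2 := by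
    rw [le_sub_iff_add_le]
    have e : (1 - 2 * p) ^ 2 / (2 * Real.log 2) + Real.binEntropy p / Real.log 2
        = ((1 - 2 * p) ^ 2 / 2 + Real.binEntropy p) / Real.log 2 := by
      field_simp
    rw [e, div_le_one hlog2]
    linarith
  have key2 : (1 / (Real.pi * Real.log 2)) * S ≤ (1 - 2 * p) ^ 2 / (2 * Real.log 2) := by
    rw [one_div_mul_eq_div, div_le_div_iff₀ (by positivity) (by positivity)]
    have hmul := mul_le_mul_of_nonneg_right hsq (mul_nonneg Real.pi_pos.le hlog2.le)
    have h6 : (2 * c) ^ 2 * (Real.pi * Real.log 2) = S * (2 * Real.log 2) := by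
      linear_combination (2 * Real.log 2) * h5
    linarith
  linarith
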